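/- Let n ≥ 1, α, t, p ∈ (0,∞), r ∈ (1,∞) and q ∈ [1,∞). There are constants C₁, C₂ > 0, independent of f, such that: if f : ℝⁿ → ℂ is measurable with ‖f‖_{(KE^{α,p}_{q,r})_t} < ∞, then there exist nonnegative reals (λ_k)_{k≥0} and measurable functions (b_k)_{k≥0} with supp(b_k) ⊆ B_k and ‖b_k‖_{(E_r^q)_t} ≤ C₁·2^{-kα} for every k ≥ 0 (dyadic central (α,q,r)-blocks of restrict type), such that f = ∑_{k=0}^{∞} λ_k b_k almost everywhere and ∑_{k=0}^{∞} λ_k^p ≤ C₂ ‖f‖_{(KE^{α,p}_{q,r})_t}^p. -/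

import Mathlib

open MeasureTheory Metric Set ENNReal
open scoped NNReal

noncomputable section

abbrev En (n : ℕ) : Type := EuclideanSpace ℝ (Fin n)

/-- Slice norm `‖f‖_{(E_r^q)_t}` for `ℝ≥0∞`-valued functions. -/
def sliceNorm (n : ℕ) (t r : ℝ) (q : ℝ≥0∞) (g : En n → ℝ≥0∞) : ℝ≥0∞ :=
  if q = ∞ then
    essSup (fun x => ((volume (ball x t))⁻¹ * ∫⁻ y in ball x t, g y ^ r) ^ (1 / r)) volume
  else
    (∫⁻ x, (((volume (ball x t))⁻¹ * ∫⁻ y in ball x t, g y ^ r) ^ (1 / r)) ^ q.toReal) ^ (1 / q.toReal)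

/-- Slice norm of a complex-valued function. -/
def sliceNormC (n : ℕ) (t r : ℝ) (q : ℝ≥0∞) (f : En n → ℂ) : ℝ≥0∞ :=
  sliceNorm n t r q fun y => (‖f y‖₊ : ℝ≥0∞)

/-- The ball `B_k = {x : |x| ≤ 2^k}`. -/
def ballZ (n : ℕ) (k : ℤ) : Set (En n) := closedBall 0 ((2 : ℝ) ^ k)

/-- The shell `S_k = B_k \ B_{k-1}`. -/
def shell (n : ℕ) (k : ℤ) : Set (En n) := ballZ n k \ ballZ n (k - 1)

/-- Homogeneous Herz-slice norm of an `ℝ≥0∞`-valued function. -/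
def herzHom (n : ℕ) (t r : ℝ) (q : ℝ≥0∞) (α : ℝ) (p : ℝ≥0∞) (g : En n → ℝ≥0∞) : ℝ≥0∞ :=
  if p = ∞ then
    ⨆ k : ℤ, (2 : ℝ≥0∞) ^ ((k : ℝ) * α) * sliceNorm n t r q ((shell n k).indicator g)
  else
    (∑' k : ℤ, ((2 : ℝ≥0∞) ^ ((k : ℝ) * α) * sliceNorm n t r q ((shell n k).indicator g)) ^ p.toReal) ^ (1 / p.toReal)

/-- Homogeneous Herz-slice norm of a complex-valued function. -/
def herzHomC (n : ℕ) (t r : ℝ) (q : ℝ≥0∞) (α : ℝ) (p : ℝ≥0∞) (f : En n → ℂ) : ℝ≥0∞ :=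
  herzHom n t r q α p fun y => (‖f y‖₊ : ℝ≥0∞)

/-- The `k`-th piece in the non-homogeneous decomposition: `B_0` for `k = 0`, `S_k` for `k ≥ 1`. -/
def pieceN (n : ℕ) (k : ℕ) : Set (En n) := if k = 0 then ballZ n 0 else shell n k

/-- Non-homogeneous Herz-slice norm of an `ℝ≥0∞`-valued function. -/
def herzNonHom (n : ℕ) (t r : ℝ) (q : ℝ≥0∞) (α : ℝ) (p : ℝ≥0∞) (g : En n → ℝ≥0∞) : ℝ≥0∞ :=
  if p = ∞ then
    ⨆ k : ℕ, (2 : ℝ≥0∞) ^ ((k : ℝ) * α) * sliceNorm n t r q ((pieceN n k).indicator g)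
  else
    (∑' k : ℕ, ((2 : ℝ≥0∞) ^ ((k : ℝ) * α) * sliceNorm n t r q ((pieceN n k).indicator g)) ^ p.toReal) ^ (1 / p.toReal)

/-- Non-homogeneous Herz-slice norm of a complex-valued function. -/
def herzNonHomC (n : ℕ) (t r : ℝ) (q : ℝ≥0∞) (α : ℝ) (p : ℝ≥0∞) (f : En n → ℂ) : ℝ≥0∞ :=
  herzNonHom n t r q α p fun y => (‖f y‖₊ : ℝ≥0∞)

/-- Hardy–Littlewood maximal operator. -/
def maximal (n : ℕ) (f : En n → ℂ) (x : En n) : ℝ≥0∞ :=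
  ⨆ (ρ : ℝ) (_ : 0 < ρ), (volume (ball x ρ))⁻¹ * ∫⁻ y in ball x ρ, (‖f y‖₊ : ℝ≥0∞)

section Helpers

variable {n : ℕ} {t r : ℝ} {q : ℝ≥0∞}

lemma nnnorm_indicator_eq (s : Set (En n)) (f : En n → ℂ) (y : En n) :
    (‖s.indicator f y‖₊ : ℝ≥0∞) = s.indicator (fun z => (‖f z‖₊ : ℝ≥0∞)) y := by
  by_cases h : y ∈ s
  · simp [Set.indicator_of_mem h]
  · simp [Set.indicator_of_notMem h]

lemma measurable_sliceInner (ht : 0 < t) {H : En n → ℝ≥0∞} (hH : Measurable H) :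
    Measurable fun x : En n => ∫⁻ y in ball x t, H y := by
  have hs : MeasurableSet {p : En n × En n | dist p.1 p.2 < t} :=
    (isOpen_lt (continuous_fst.dist continuous_snd) continuous_const).measurableSet
  have hm : Measurable fun p : En n × En n =>
      ({p : En n × En n | dist p.1 p.2 < t}).indicator (fun p => H p.2) p :=
    (hH.comp measurable_snd).indicator hs
  have h2 := hm.lintegral_prod_right' (ν := (volume : Measure (En n)))
  have heq : (fun x : En n => ∫⁻ y in ball x t, H y)
      = fun x : En n => ∫⁻ y, ({p : En n × En n | dist p.1 p.2 < t}).indicator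
          (fun p => H p.2) (x, y) := by
    funext x
    rw [← lintegral_indicator measurableSet_ball]
    congr 1
    funext y
    by_cases h : y ∈ ball x t
    · rw [Set.indicator_of_mem h, Set.indicator_of_mem]
      simpa [dist_comm] using h
    · rw [Set.indicator_of_notMem h, Set.indicator_of_notMem]
      simpa [dist_comm] using h
  rw [heq]
  exact h2

lemma qt_pos (hq : 1 ≤ q) (hq' : q ≠ ∞) : 0 < q.toReal :=
  ENNReal.toReal_pos (zero_lt_one.trans_le hq).ne' hq'

lemma sliceNorm_const_mul (hr : 1 < r) (hq : 1 ≤ q) (hq' : q ≠ ∞)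
    {c : ℝ≥0∞} (hc : c ≠ ∞) (h : En n → ℝ≥0∞) :
    sliceNorm n t r q (fun y => c * h y) = c * sliceNorm n t r q h := by
  have hr0 : (0 : ℝ) < r := lt_trans one_pos hr
  have hqt : 0 < q.toReal := qt_pos hq hq'
  unfold sliceNorm
  rw [if_neg hq', if_neg hq']
  have key : ∀ x : En n,
      ((volume (ball x t))⁻¹ * ∫⁻ y in ball x t, (c * h y) ^ r) ^ (1 / r)
        = c * ((volume (ball x t))⁻¹ * ∫⁻ y in ball x t, h y ^ r) ^ (1 / r) := by
    intro x
    have h1 : (∫⁻ y in ball x t, (c * h y) ^ r) = c ^ r * ∫⁻ y in ball x t, h y ^ r := by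
      simp_rw [ENNReal.mul_rpow_of_nonneg _ _ hr0.le]
      exact lintegral_const_mul' _ _ (ENNReal.rpow_lt_top_of_nonneg hr0.le hc).ne
    rw [h1, mul_left_comm, ENNReal.mul_rpow_of_nonneg _ _ (by positivity : (0:ℝ) ≤ 1/r),
      ← ENNReal.rpow_mul, mul_one_div_cancel hr0.ne', ENNReal.rpow_one]
  simp_rw [key, ENNReal.mul_rpow_of_nonneg _ _ hqt.le]
  rw [lintegral_const_mul' _ _ (ENNReal.rpow_lt_top_of_nonneg hqt.le hc).ne,
    ENNReal.mul_rpow_of_nonneg _ _ (by positivity : (0:ℝ) ≤ 1/q.toReal),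
    ← ENNReal.rpow_mul, mul_one_div_cancel hqt.ne', ENNReal.rpow_one]

lemma sliceNorm_zero_fun (hr : 1 < r) (hq : 1 ≤ q) (hq' : q ≠ ∞) :
    sliceNorm n t r q (fun _ => (0 : ℝ≥0∞)) = 0 := by
  have := sliceNorm_const_mul (n := n) (t := t) hr hq hq'
    (c := 0) (by simp) (fun _ => (0 : ℝ≥0∞))
  simpa using this

lemma sliceNorm_eq_zero_ae (ht : 0 < t) (hr : 1 < r) (hq : 1 ≤ q) (hq' : q ≠ ∞)
    {h : En n → ℝ≥0∞} (hm : Measurable h) (h0 : sliceNorm n t r q h = 0) :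
    ∀ᵐ y ∂(volume : Measure (En n)), h y = 0 := by
  have hr0 : (0 : ℝ) < r := lt_trans one_pos hr
  have hqt : 0 < q.toReal := qt_pos hq hq'
  set v : ℝ≥0∞ := volume (ball (0 : En n) t) with hv
  have hv0 : v ≠ 0 := (measure_ball_pos volume _ ht).ne'
  have hvt : v ≠ ∞ := measure_ball_lt_top.ne
  have hball : ∀ x : En n, volume (ball x t) = v := fun x =>
    MeasureTheory.Measure.addHaar_ball_center volume x t
  set H : En n → ℝ≥0∞ := fun y => h y ^ r with hH
  have hHm : Measurable H := hm.pow_const r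
  set I : En n → ℝ≥0∞ := fun x => ∫⁻ y in ball x t, H y with hI
  have hIm : Measurable I := measurable_sliceInner ht hHm
  set F : En n → ℝ≥0∞ := fun x => (v⁻¹ * I x) ^ (1 / r) with hF
  have hFm : Measurable F := ((measurable_const.mul hIm).pow_const _)
  have h0' : (∫⁻ x, F x ^ q.toReal) = 0 := by
    have : sliceNorm n t r q h = (∫⁻ x, F x ^ q.toReal) ^ (1 / q.toReal) := by
      unfold sliceNorm
      rw [if_neg hq']
      congr 1
      refine lintegral_congr fun x => ?_
      rw [hball x]
    rw [this] at h0
    rcases ENNReal.rpow_eq_zero_iff.1 h0 with ⟨h1, _⟩ | ⟨_, h2⟩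
    · exact h1
    · exact absurd h2 (one_div_pos.2 hqt).asymm
  have hFae : ∀ᵐ x ∂(volume : Measure (En n)), F x ^ q.toReal = 0 :=
    (lintegral_eq_zero_iff ((hFm.pow_const _))).1 h0'
  have hIae : ∀ᵐ x ∂(volume : Measure (En n)), I x = 0 := by
    filter_upwards [hFae] with x hx
    rcases ENNReal.rpow_eq_zero_iff.1 hx with ⟨h1, _⟩ | ⟨_, h2⟩
    · rcases ENNReal.rpow_eq_zero_iff.1 h1 with ⟨h3, _⟩ | ⟨_, h4⟩
      · rcases mul_eq_zero.1 h3 with h5 | h5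
        · exact absurd h5 (ENNReal.inv_ne_zero.2 hvt)
        · exact h5
      · exact absurd h4 (one_div_pos.2 hr0).asymm
    · exact absurd h2 hqt.asymm
  -- integrate: ∫ I = 0, swap, conclude ∫ H * v = 0
  have hint : (∫⁻ x, I x) = 0 := by
    rw [lintegral_congr_ae hIae, lintegral_zero]
  have hswap : (∫⁻ x, I x) = ∫⁻ y, H y * v := by
    have hs : MeasurableSet {p : En n × En n | dist p.1 p.2 < t} :=
      (isOpen_lt (continuous_fst.dist continuous_snd) continuous_const).measurableSet
    have hm2 : Measurable fun p : En n × En n =>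
        ({p : En n × En n | dist p.1 p.2 < t}).indicator (fun p => H p.2) p :=
      (hHm.comp measurable_snd).indicator hs
    calc (∫⁻ x, I x)
        = ∫⁻ x, ∫⁻ y, ({p : En n × En n | dist p.1 p.2 < t}).indicator
            (fun p => H p.2) (x, y) := by
          refine lintegral_congr fun x => ?_
          show (∫⁻ y in ball x t, H y) = _
          rw [← lintegral_indicator measurableSet_ball]
          refine lintegral_congr fun y => ?_
          by_cases hxy : y ∈ ball x t
          · rw [Set.indicator_of_mem hxy, Set.indicator_of_mem]
            simpa [dist_comm] using hxy
          · rw [Set.indicator_of_notMem hxy, Set.indicator_of_notMem]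
            simpa [dist_comm] using hxy
      _ = ∫⁻ y, ∫⁻ x, ({p : En n × En n | dist p.1 p.2 < t}).indicator
            (fun p => H p.2) (x, y) := by
          exact lintegral_lintegral_swap hm2.aemeasurable
      _ = ∫⁻ y, H y * v := by
          refine lintegral_congr fun y => ?_
          have : ∀ x : En n, ({p : En n × En n | dist p.1 p.2 < t}).indicator
              (fun p => H p.2) (x, y) = (ball y t).indicator (fun _ => H y) x := by
            intro x
            by_cases hxy : x ∈ ball y t
            · rw [Set.indicator_of_mem hxy, Set.indicator_of_mem]
              simpa [dist_comm] using hxy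
            · rw [Set.indicator_of_notMem hxy, Set.indicator_of_notMem]
              simpa [dist_comm] using hxy
          simp_rw [this]
          rw [lintegral_indicator_const measurableSet_ball, hball y]
  have hHint : (∫⁻ y, H y) = 0 := by
    have h1 : (∫⁻ y, H y * v) = 0 := hswap ▸ hint
    rw [lintegral_mul_const' v H hvt] at h1
    rcases mul_eq_zero.1 h1 with h2 | h2
    · exact h2
    · exact absurd h2 hv0
  have hHae := (lintegral_eq_zero_iff hHm).1 hHint
  filter_upwards [hHae] with y hy
  rcases ENNReal.rpow_eq_zero_iff.1 hy with ⟨h1, _⟩ | ⟨_, h2⟩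
  · exact h1
  · exact absurd h2 hr0.asymm

lemma measurableSet_pieceN (k : ℕ) : MeasurableSet (pieceN n k) := by
  unfold pieceN shell ballZ
  split
  · exact measurableSet_closedBall
  · exact measurableSet_closedBall.diff measurableSet_closedBall

lemma pieceN_subset_ballZ (k : ℕ) : pieceN n k ⊆ ballZ n (k : ℤ) := by
  unfold pieceN shell
  split
  · rename_i h; subst h; exact subset_rfl
  · exact Set.diff_subset

lemma ballZ_mono {j k : ℤ} (hjk : j ≤ k) : ballZ n j ⊆ ballZ n k :=
  closedBall_subset_closedBall (zpow_le_zpow_right₀ one_le_two hjk)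

lemma pieceN_mem_unique {x : En n} {j k : ℕ} (hj : x ∈ pieceN n j) (hk : x ∈ pieceN n k) :
    j = k := by
  have claim : ∀ a b : ℕ, a < b → x ∈ pieceN n a → x ∉ pieceN n b := by
    intro a b hab hxa hxb
    have hb : b ≠ 0 := by omega
    rw [pieceN, if_neg hb] at hxb
    have hxa' : x ∈ ballZ n a := pieceN_subset_ballZ a hxa
    have : x ∈ ballZ n ((b : ℤ) - 1) :=
      ballZ_mono (by omega) hxa'
    exact hxb.2 this
  rcases lt_trichotomy j k with h | h | h
  · exact absurd hk (claim j k h hj)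
  · exact h
  · exact absurd hj (claim k j h hk)

lemma pieceN_cover (x : En n) : ∃ k : ℕ, x ∈ pieceN n k := by
  by_cases hx : ‖x‖ ≤ 1
  · refine ⟨0, ?_⟩
    rw [pieceN, if_pos rfl]
    simp only [ballZ, Metric.mem_closedBall, dist_zero_right]
    simpa using hx
  · push_neg at hx
    have hex : ∃ m : ℕ, ‖x‖ ≤ 2 ^ m := by
      obtain ⟨m, hm⟩ := pow_unbounded_of_one_lt ‖x‖ (by norm_num : (1:ℝ) < 2)
      exact ⟨m, hm.le⟩
    classical
    set k := Nat.find hex with hk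
    have hk1 : ‖x‖ ≤ 2 ^ k := Nat.find_spec hex
    have hk0 : k ≠ 0 := by
      intro h
      rw [h] at hk1
      simp at hk1
      linarith
    have hkm : ¬ (‖x‖ ≤ 2 ^ (k - 1)) := Nat.find_min hex (by omega)
    refine ⟨k, ?_⟩
    rw [pieceN, if_neg hk0]
    constructor
    · simp only [ballZ, Metric.mem_closedBall, dist_zero_right]
      rw [zpow_natCast]
      exact hk1
    · simp only [ballZ, Metric.mem_closedBall, dist_zero_right]
      intro hcon
      apply hkm
      have : ((k : ℤ) - 1) = ((k - 1 : ℕ) : ℤ) := by omega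
      rw [this, zpow_natCast] at hcon
      exact hcon

end Helpers


/-- block decomposition of the non-homogeneous Herz-slice space
(direct direction). -/
theorem nonHomHerzSlice_block_decomposition
    (n : ℕ) (hn : 1 ≤ n) (α t r : ℝ) (hα : 0 < α) (ht : 0 < t) (hr : 1 < r)
    (p : ℝ≥0∞) (hp : 0 < p) (hp' : p ≠ ∞) (q : ℝ≥0∞) (hq : 1 ≤ q) (hq' : q ≠ ∞) :
    ∃ C₁ C₂ : ℝ≥0, 0 < C₁ ∧ 0 < C₂ ∧
      ∀ f : En n → ℂ, Measurable f → herzNonHomC n t r q α p f < ∞ →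
        ∃ (lam : ℕ → ℝ≥0) (b : ℕ → En n → ℂ),
          (∀ k, Measurable (b k)) ∧
          (∀ k, Function.support (b k) ⊆ ballZ n (k : ℤ)) ∧
          (∀ k : ℕ, sliceNormC n t r q (b k) ≤ (C₁ : ℝ≥0∞) * (2 : ℝ≥0∞) ^ (-(k : ℝ) * α)) ∧
          (∀ᵐ x ∂(volume : Measure (En n)), f x = ∑' k : ℕ, ((lam k : ℝ) : ℂ) * b k x) ∧
          ∑' k : ℕ, ((lam k : ℝ≥0∞)) ^ p.toReal
            ≤ (C₂ : ℝ≥0∞) * herzNonHomC n t r q α p f ^ p.toReal := by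
  classical
  have hr0 : (0 : ℝ) < r := lt_trans one_pos hr
  have hqt : 0 < q.toReal := qt_pos hq hq'
  have hpt : 0 < p.toReal := ENNReal.toReal_pos hp.ne' hp'
  refine ⟨1, 1, one_pos, one_pos, ?_⟩
  intro f hf hfin
  set gg : En n → ℝ≥0∞ := fun y => (‖f y‖₊ : ℝ≥0∞) with hgg
  have hggm : Measurable gg := hf.nnnorm.coe_nnreal_ennreal
  set N : ℕ → ℝ≥0∞ := fun k => sliceNorm n t r q ((pieceN n k).indicator gg) with hN
  set A : ℕ → ℝ≥0∞ := fun k => (2 : ℝ≥0∞) ^ ((k : ℝ) * α) with hA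
  have hA0 : ∀ k, A k ≠ 0 := fun k =>
    (ENNReal.rpow_pos (by norm_num) (by norm_num)).ne'
  have hAt : ∀ k, A k ≠ ∞ := by
    intro k h
    rw [hA] at h
    rcases ENNReal.rpow_eq_top_iff.1 h with ⟨h1, _⟩ | ⟨h1, _⟩ <;> norm_num at h1
  set S : ℝ≥0∞ := ∑' k : ℕ, (A k * N k) ^ p.toReal with hS
  have hherz : herzNonHomC n t r q α p f = S ^ (1 / p.toReal) := by
    rw [hS, hA, hN, hgg]
    simp only [herzNonHomC, herzNonHom, if_neg hp']
  have hSfin : S ≠ ∞ := by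
    intro hStop
    refine hfin.ne ?_
    rw [hherz, hStop, ENNReal.top_rpow_of_pos (by positivity)]
  have hLt : ∀ k, A k * N k ≠ ∞ := by
    intro k h
    have h1 : (A k * N k) ^ p.toReal ≤ S := ENNReal.le_tsum k
    rw [h, ENNReal.top_rpow_of_pos hpt] at h1
    exact hSfin (top_le_iff.1 h1)
  have hNt : ∀ k, N k ≠ ∞ := by
    intro k h
    exact hLt k (by rw [h, ENNReal.mul_top (hA0 k)])
  set lam : ℕ → ℝ≥0 := fun k => (A k * N k).toNNReal with hlamdef
  have hlam : ∀ k, ((lam k : ℝ≥0∞)) = A k * N k := fun k =>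
    ENNReal.coe_toNNReal (hLt k)
  set b : ℕ → En n → ℂ := fun k =>
    if A k * N k = 0 then (fun _ => 0)
    else fun x => (((lam k : ℝ) : ℂ))⁻¹ * (pieceN n k).indicator f x with hbdef
  refine ⟨lam, b, ?_, ?_, ?_, ?_, ?_⟩
  · -- measurability
    intro k
    by_cases hk : A k * N k = 0
    · simp only [hbdef, if_pos hk]; exact measurable_const
    · simp only [hbdef, if_neg hk]
      exact (hf.indicator (measurableSet_pieceN k)).const_mul _
  · -- support
    intro k x hx
    rw [Function.mem_support] at hx
    by_cases hk : A k * N k = 0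
    · simp only [hbdef, if_pos hk] at hx; exact absurd rfl hx
    · simp only [hbdef, if_neg hk] at hx
      have hind : (pieceN n k).indicator f x ≠ 0 := fun h => hx (by rw [h, mul_zero])
      have hxp : x ∈ pieceN n k := by
        by_contra hxp
        exact hind (Set.indicator_of_notMem hxp f)
      exact pieceN_subset_ballZ k hxp
  · -- slice norm bound
    intro k
    by_cases hk : A k * N k = 0
    · have hzero : sliceNormC n t r q (b k) = 0 := by
        simp only [hbdef, if_pos hk]
        rw [sliceNormC]
        simpa using sliceNorm_zero_fun (n := n) (t := t) hr hq hq'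
      rw [hzero]
      exact zero_le
    · have hNk0 : N k ≠ 0 := fun h => hk (by rw [h, mul_zero])
      have hlamne : lam k ≠ 0 := fun h => hk (by rw [← hlam k, h, ENNReal.coe_zero])
      have hcne : ((lam k : ℝ≥0∞))⁻¹ ≠ ∞ := ENNReal.inv_ne_top.2 (by exact_mod_cast hlamne)
      have hfun : (fun y => (‖b k y‖₊ : ℝ≥0∞))
          = fun y => ((lam k : ℝ≥0∞))⁻¹ * (pieceN n k).indicator gg y := by
        funext y
        simp only [hbdef, if_neg hk]
        rw [nnnorm_mul, nnnorm_inv, Complex.nnnorm_real, NNReal.nnnorm_eq,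
          ENNReal.coe_mul, ENNReal.coe_inv hlamne, nnnorm_indicator_eq]
      have hNkeq : sliceNorm n t r q ((pieceN n k).indicator gg) = N k := rfl
      rw [sliceNormC, hfun, sliceNorm_const_mul hr hq hq' hcne, hNkeq, hlam k,
        ENNReal.mul_inv (Or.inl (hA0 k)) (Or.inl (hAt k)), mul_assoc,
        ENNReal.inv_mul_cancel hNk0 (hNt k), mul_one, ENNReal.coe_one, one_mul,
        neg_mul, ENNReal.rpow_neg]
  · -- a.e. identity
    have hzero : ∀ k, A k * N k = 0 →
        ∀ᵐ x ∂(volume : Measure (En n)), (pieceN n k).indicator gg x = 0 := by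
      intro k hk
      have hNk : N k = 0 := by
        rcases mul_eq_zero.1 hk with h | h
        · exact absurd h (hA0 k)
        · exact h
      rw [hN] at hNk
      exact sliceNorm_eq_zero_ae ht hr hq hq'
        (hggm.indicator (measurableSet_pieceN k)) hNk
    have hae : ∀ᵐ x ∂(volume : Measure (En n)),
        ∀ k, A k * N k = 0 → (pieceN n k).indicator gg x = 0 := by
      rw [MeasureTheory.ae_all_iff]
      intro k
      by_cases hk : A k * N k = 0
      · filter_upwards [hzero k hk] with x hx _
        exact hx
      · filter_upwards with x h
        exact absurd h hk
    filter_upwards [hae] with x hx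
    obtain ⟨k₀, hk₀⟩ := pieceN_cover x
    have htsum : (∑' k, ((lam k : ℝ) : ℂ) * b k x) = ((lam k₀ : ℝ) : ℂ) * b k₀ x := by
      refine tsum_eq_single k₀ fun j hj => ?_
      by_cases hk : A j * N j = 0
      · simp only [hbdef, if_pos hk, mul_zero]
      · simp only [hbdef, if_neg hk]
        rw [Set.indicator_of_notMem (fun hmem => hj (pieceN_mem_unique hmem hk₀)) f,
          mul_zero, mul_zero]
    rw [htsum]
    by_cases hk : A k₀ * N k₀ = 0
    · simp only [hbdef, if_pos hk, mul_zero]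
      have h1 := hx k₀ hk
      rw [Set.indicator_of_mem hk₀] at h1
      simp only [hgg] at h1
      have h2 : ‖f x‖₊ = 0 := by exact_mod_cast h1
      simpa using h2
    · have hlamne : lam k₀ ≠ 0 := fun h => hk (by rw [← hlam k₀, h, ENNReal.coe_zero])
      have hC : ((lam k₀ : ℝ) : ℂ) ≠ 0 := by
        exact_mod_cast fun h => hlamne (by exact_mod_cast h)
      simp only [hbdef, if_neg hk]
      rw [Set.indicator_of_mem hk₀, ← mul_assoc, mul_inv_cancel₀ hC, one_mul]
  · -- coefficient bound
    have heq : (∑' k : ℕ, ((lam k : ℝ≥0∞)) ^ p.toReal) = S := by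
      rw [hS]
      exact tsum_congr fun k => by rw [hlam k]
    rw [heq, hherz, ENNReal.coe_one, one_mul, ← ENNReal.rpow_mul, one_div, inv_mul_cancel₀ hpt.ne',
      ENNReal.rpow_one]
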